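/- The adjoint of the beta multiplication kernel in the gamma-weighted L² spaces is given explicitly: for β, ε > 0 and bounded measurable g on ℝ₊, Λ*_{β,ε}[g](x) = (x^β/Γ(β)) ∫₀^∞ g((1+s)x) s^{β−1} e^{−sx} ds, where Λ_{β,ε}[f](x) = (Γ(β+ε)/(Γ(β)Γ(ε))) ∫₀¹ f(rx) r^{ε−1}(1−r)^{β−1} dr, and the adjoint is with respect to the duality ν_{β+ε}[g Λ_{β,ε}[f]] = ν_ε[f Λ*_{β,ε}[g]] for ν_a(dx) = x^{a−1}e^{−x}/Γ(a) dx. -/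

import Mathlib

open MeasureTheory

/-- The gamma distribution `ν_a` with shape `a` and scale `1`, on `(0,∞)`. -/
noncomputable def gammaMeasure (a : ℝ) : Measure ℝ :=
  (volume.restrict (Set.Ioi (0 : ℝ))).withDensity
    fun x => ENNReal.ofReal (x ^ (a - 1) * Real.exp (-x) / Real.Gamma a)

/-- The beta multiplication kernel `Λ_{β,ε}`. -/
noncomputable def betaKernelOp (β ε : ℝ) (f : ℝ → ℝ) (x : ℝ) : ℝ :=
  (Real.Gamma (β + ε) / (Real.Gamma β * Real.Gamma ε)) *
    ∫ r in Set.Ioo (0 : ℝ) 1, f (r * x) * r ^ (ε - 1) * (1 - r) ^ (β - 1)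

/-- The kernel `Λ*_{β,ε}`. -/
noncomputable def betaKernelAdjOp (β : ℝ) (g : ℝ → ℝ) (x : ℝ) : ℝ :=
  x ^ β / Real.Gamma β *
    ∫ s in Set.Ioi (0 : ℝ), g ((1 + s) * x) * s ^ (β - 1) * Real.exp (-(s * x))

section BetaKernelAux

open Set Real
open scoped NNReal ENNReal

noncomputable def bkKer (β ε : ℝ) (f g : ℝ → ℝ) (x y : ℝ) : ℝ :=
  g x * f y * (y ^ (ε - 1) * (x - y) ^ (β - 1) * Real.exp (-x)) /
    (Real.Gamma β * Real.Gamma ε)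

lemma aux_scale {x : ℝ} (hx : 0 < x) (F : ℝ → ℝ) :
    ∫ y in Set.Ioo (0:ℝ) x, F y = x * ∫ r in Set.Ioo (0:ℝ) 1, F (r * x) := by
  rw [← integral_indicator measurableSet_Ioo, ← integral_indicator measurableSet_Ioo]
  have h := MeasureTheory.Measure.integral_comp_mul_right
    (Set.indicator (Set.Ioo (0:ℝ) x) F) x
  have hpre : ((· * x) ⁻¹' Set.Ioo (0:ℝ) x) = Set.Ioo (0:ℝ) 1 := by
    rw [Set.preimage_mul_const_Ioo₀ _ _ hx, zero_div, div_self hx.ne']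
  have hind : ∀ r : ℝ, Set.indicator (Set.Ioo (0:ℝ) x) F (r * x)
      = Set.indicator (Set.Ioo (0:ℝ) 1) (fun r => F (r * x)) r := by
    intro r
    rw [← hpre]
    simp [Set.indicator, Set.mem_preimage]
  simp_rw [hind] at h
  rw [h, abs_of_pos (inv_pos.2 hx), smul_eq_mul, ← mul_assoc, mul_inv_cancel₀ hx.ne', one_mul]

lemma kernel_lhs {β ε : ℝ} (hβ : 0 < β) (hε : 0 < ε) (f g : ℝ → ℝ) {x : ℝ} (hx : 0 < x) :
    (x ^ (β + ε - 1) * Real.exp (-x) / Real.Gamma (β + ε)) * (g x * betaKernelOp β ε f x)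
      = ∫ y in Set.Ioo (0:ℝ) x, bkKer β ε f g x y := by
  have hΓβ := Real.Gamma_pos_of_pos hβ
  have hΓε := Real.Gamma_pos_of_pos hε
  have hΓs := Real.Gamma_pos_of_pos (add_pos hβ hε)
  set F : ℝ → ℝ := fun y => f y * (y / x) ^ (ε - 1) * (1 - y / x) ^ (β - 1) with hF
  have hFr : ∀ r : ℝ, F (r * x) = f (r * x) * r ^ (ε - 1) * (1 - r) ^ (β - 1) := by
    intro r
    simp only [hF, mul_div_assoc, div_self hx.ne', mul_one]
  have h1 : betaKernelOp β ε f x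
      = (Real.Gamma (β + ε) / (Real.Gamma β * Real.Gamma ε)) * (x⁻¹ * ∫ y in Set.Ioo (0:ℝ) x, F y) := by
    rw [betaKernelOp, aux_scale hx F]
    simp_rw [hFr]
    rw [← mul_assoc x⁻¹, inv_mul_cancel₀ hx.ne', one_mul]
  rw [h1]
  have h2 : x ^ (β + ε - 1) * Real.exp (-x) / Real.Gamma (β + ε) *
      (g x * (Real.Gamma (β + ε) / (Real.Gamma β * Real.Gamma ε) * (x⁻¹ * ∫ y in Set.Ioo (0:ℝ) x, F y)))
      = ∫ y in Set.Ioo (0:ℝ) x,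
          (x ^ (β + ε - 1) * Real.exp (-x) / Real.Gamma (β + ε) * g x *
            (Real.Gamma (β + ε) / (Real.Gamma β * Real.Gamma ε)) * x⁻¹) * F y := by
    rw [MeasureTheory.integral_const_mul]
    ring
  rw [h2]
  refine setIntegral_congr_fun measurableSet_Ioo fun y hy => ?_
  obtain ⟨hy0, hyx⟩ := hy
  have hxy : 0 < x - y := by linarith
  have e1 : (y / x) ^ (ε - 1) = y ^ (ε - 1) / x ^ (ε - 1) :=
    Real.div_rpow hy0.le hx.le _
  have e2 : (1 - y / x) ^ (β - 1) = (x - y) ^ (β - 1) / x ^ (β - 1) := by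
    rw [show 1 - y / x = (x - y) / x by field_simp, Real.div_rpow hxy.le hx.le]
  have hxpow : x ^ (β + ε - 1) = x ^ (ε - 1) * x ^ (β - 1) * x := by
    rw [show β + ε - 1 = (ε - 1) + ((β - 1) + 1) by ring, Real.rpow_add hx,
      Real.rpow_add hx, Real.rpow_one]
    ring
  have hxε := Real.rpow_pos_of_pos hx (ε - 1)
  have hxβ := Real.rpow_pos_of_pos hx (β - 1)
  rw [bkKer, hF]
  simp only
  rw [e1, e2, hxpow]
  field_simp

lemma aux_shift (c : ℝ) (F : ℝ → ℝ) :
    ∫ u in Set.Ioi (0:ℝ), F (u + c) = ∫ x in Set.Ioi c, F x := by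
  rw [← integral_indicator measurableSet_Ioi, ← integral_indicator measurableSet_Ioi]
  have h := integral_add_right_eq_self (μ := volume) (Set.indicator (Set.Ioi c) F) c
  have hind : ∀ u : ℝ, Set.indicator (Set.Ioi c) F (u + c)
      = Set.indicator (Set.Ioi (0:ℝ)) (fun u => F (u + c)) u := by
    intro u
    simp only [Set.indicator, Set.mem_Ioi]
    by_cases hu : 0 < u
    · rw [if_pos (by linarith), if_pos hu]
    · rw [if_neg (by intro h'; exact hu (by linarith)), if_neg hu]
  simp_rw [hind] at h
  rw [h]

lemma aux_shiftscale {y : ℝ} (hy : 0 < y) (F : ℝ → ℝ) :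
    ∫ x in Set.Ioi y, F x = y * ∫ s in Set.Ioi (0:ℝ), F ((1 + s) * y) := by
  have h := MeasureTheory.integral_comp_mul_right_Ioi (fun u => F (u + y)) 0 hy
  simp only [zero_mul] at h
  rw [aux_shift y F] at h
  have : ∀ s : ℝ, F (s * y + y) = F ((1 + s) * y) := by intro s; ring_nf
  simp_rw [this] at h
  rw [h, smul_eq_mul, ← mul_assoc, mul_inv_cancel₀ hy.ne', one_mul]

lemma kernel_rhs {β ε : ℝ} (hβ : 0 < β) (hε : 0 < ε) (f g : ℝ → ℝ) {y : ℝ} (hy : 0 < y) :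
    (y ^ (ε - 1) * Real.exp (-y) / Real.Gamma ε) * (f y * betaKernelAdjOp β g y)
      = ∫ x in Set.Ioi y, bkKer β ε f g x y := by
  have hΓβ := Real.Gamma_pos_of_pos hβ
  have hΓε := Real.Gamma_pos_of_pos hε
  set F : ℝ → ℝ := fun x => g x * ((x - y) / y) ^ (β - 1) * Real.exp (-(x - y)) with hF
  have hFs : ∀ s : ℝ, F ((1 + s) * y) = g ((1 + s) * y) * s ^ (β - 1) * Real.exp (-(s * y)) := by
    intro s
    have h1 : (1 + s) * y - y = s * y := by ring
    simp only [hF, h1, mul_div_assoc, mul_div_cancel_right₀ _ hy.ne']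
  have h1 : betaKernelAdjOp β g y
      = y ^ β / Real.Gamma β * (y⁻¹ * ∫ x in Set.Ioi y, F x) := by
    rw [betaKernelAdjOp, aux_shiftscale hy F]
    simp_rw [hFs]
    rw [← mul_assoc y⁻¹, inv_mul_cancel₀ hy.ne', one_mul]
  rw [h1]
  have h2 : y ^ (ε - 1) * Real.exp (-y) / Real.Gamma ε *
      (f y * (y ^ β / Real.Gamma β * (y⁻¹ * ∫ x in Set.Ioi y, F x)))
      = ∫ x in Set.Ioi y,
          (y ^ (ε - 1) * Real.exp (-y) / Real.Gamma ε * f y * (y ^ β / Real.Gamma β) * y⁻¹) * F x := by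
    rw [MeasureTheory.integral_const_mul]
    ring
  rw [h2]
  refine setIntegral_congr_fun measurableSet_Ioi fun x hx => ?_
  have hxy : 0 < x - y := by simp only [Set.mem_Ioi] at hx; linarith
  have e1 : ((x - y) / y) ^ (β - 1) = (x - y) ^ (β - 1) / y ^ (β - 1) :=
    Real.div_rpow hxy.le hy.le _
  have e2 : Real.exp (-(x - y)) = Real.exp (-x) * Real.exp y := by
    rw [← Real.exp_add]; ring_nf
  have hypow : y ^ β = y ^ (β - 1) * y := by
    rw [show β = (β - 1) + 1 by ring, Real.rpow_add hy, Real.rpow_one]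
    ring_nf
  have hyβ := Real.rpow_pos_of_pos hy (β - 1)
  rw [bkKer, hF]
  simp only
  rw [e1, e2, hypow]
  have hey := Real.exp_pos y
  have hex := Real.exp_pos (-y)
  field_simp
  have e3 : Real.exp (-y) * Real.exp y = 1 := by rw [← Real.exp_add]; simp
  linear_combination (f y * g x) * e3

lemma betaIntegrable {β ε : ℝ} (hβ : 0 < β) (hε : 0 < ε) :
    IntegrableOn (fun r : ℝ => r ^ (ε - 1) * (1 - r) ^ (β - 1)) (Set.Ioo (0:ℝ) 1) := by
  have h := Complex.betaIntegral_convergent (u := (ε:ℂ)) (v := (β:ℂ))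
    (by simpa using hε) (by simpa using hβ)
  rw [intervalIntegrable_iff_integrableOn_Ioc_of_le zero_le_one] at h
  have h2 : IntegrableOn
      (fun r : ℝ => ((r:ℂ) ^ ((ε:ℂ) - 1) * ((1:ℂ) - r) ^ ((β:ℂ) - 1)).re) (Set.Ioo (0:ℝ) 1) :=
    (Complex.reCLM.integrable_comp (h.mono_set Set.Ioo_subset_Ioc_self))
  refine h2.congr_fun ?_ measurableSet_Ioo
  intro r hr
  obtain ⟨hr0, hr1⟩ := hr
  have e1 : (r:ℂ) ^ ((ε:ℂ) - 1) = ((r ^ (ε - 1) : ℝ) : ℂ) := by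
    rw [show ((ε:ℂ) - 1) = ((ε - 1 : ℝ) : ℂ) by push_cast; ring,
      ← Complex.ofReal_cpow hr0.le]
  have e2 : ((1:ℂ) - r) ^ ((β:ℂ) - 1) = (((1 - r) ^ (β - 1) : ℝ) : ℂ) := by
    rw [show ((1:ℂ) - r) = (((1 - r : ℝ)):ℂ) by push_cast; ring,
      show ((β:ℂ) - 1) = ((β - 1 : ℝ) : ℂ) by push_cast; ring,
      ← Complex.ofReal_cpow (by linarith)]
  simp [e1, e2, ← Complex.ofReal_mul]

lemma betaIntegrableScaled {β ε : ℝ} (hβ : 0 < β) (hε : 0 < ε) {x : ℝ} (hx : 0 < x) :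
    IntegrableOn (fun y : ℝ => y ^ (ε - 1) * (x - y) ^ (β - 1)) (Set.Ioo (0:ℝ) x) := by
  set G : ℝ → ℝ := fun r => r ^ (ε - 1) * (1 - r) ^ (β - 1) with hG
  have h0 : Integrable (Set.indicator (Set.Ioo (0:ℝ) 1) G) volume := by
    rw [integrable_indicator_iff measurableSet_Ioo]
    exact betaIntegrable hβ hε
  have h1 : Integrable (fun y : ℝ => Set.indicator (Set.Ioo (0:ℝ) 1) G (y * x⁻¹)) volume := by
    rw [integrable_comp_mul_right_iff _ (inv_ne_zero hx.ne')]
    exact h0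
  have hpre : ((· * x⁻¹) ⁻¹' Set.Ioo (0:ℝ) 1) = Set.Ioo (0:ℝ) x := by
    rw [Set.preimage_mul_const_Ioo₀ _ _ (inv_pos.2 hx), zero_div, one_div, inv_inv]
  have h2 : IntegrableOn (fun y : ℝ => G (y * x⁻¹)) (Set.Ioo (0:ℝ) x) := by
    refine (integrable_indicator_iff (measurableSet_Ioo :
      MeasurableSet (Set.Ioo (0:ℝ) x))).mp ?_
    refine h1.congr (Filter.Eventually.of_forall fun y => ?_)
    rw [← hpre]
    simp [Set.indicator, Set.mem_preimage]
  have h3 : IntegrableOn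
      (fun y : ℝ => (x ^ (ε - 1) * x ^ (β - 1)) * G (y * x⁻¹)) (Set.Ioo (0:ℝ) x) :=
    h2.const_mul _
  refine h3.congr_fun (fun y hy => ?_) measurableSet_Ioo
  obtain ⟨hy0, hyx⟩ := hy
  have hxy : 0 < x - y := by linarith
  simp only [hG]
  rw [show y * x⁻¹ = y / x by ring, Real.div_rpow hy0.le hx.le,
    show (1 : ℝ) - y / x = (x - y) / x by field_simp, Real.div_rpow hxy.le hx.le]
  have h4 := (Real.rpow_pos_of_pos hx (ε - 1)).ne'
  have h5 := (Real.rpow_pos_of_pos hx (β - 1)).ne'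
  field_simp

lemma betaScaledValue {β ε : ℝ} (hβ : 0 < β) (hε : 0 < ε) {x : ℝ} (hx : 0 < x) :
    ∫ y in Set.Ioo (0:ℝ) x, y ^ (ε - 1) * (x - y) ^ (β - 1)
      = x ^ (β + ε - 1) * ∫ r in Set.Ioo (0:ℝ) 1, r ^ (ε - 1) * (1 - r) ^ (β - 1) := by
  rw [aux_scale hx]
  have h1 : ∫ r in Set.Ioo (0:ℝ) 1, (r * x) ^ (ε - 1) * (x - r * x) ^ (β - 1)
      = ∫ r in Set.Ioo (0:ℝ) 1,
          (x ^ (ε - 1) * x ^ (β - 1)) * (r ^ (ε - 1) * (1 - r) ^ (β - 1)) := by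
    refine setIntegral_congr_fun measurableSet_Ioo fun r hr => ?_
    obtain ⟨hr0, hr1⟩ := hr
    rw [Real.mul_rpow hr0.le hx.le, show x - r * x = (1 - r) * x by ring,
      Real.mul_rpow (by linarith) hx.le]
    ring
  rw [h1, MeasureTheory.integral_const_mul, ← mul_assoc, ← mul_assoc,
    show x * x ^ (ε - 1) * x ^ (β - 1) = x ^ (β + ε - 1) by
      rw [show β + ε - 1 = 1 + ((ε - 1) + (β - 1)) by ring, Real.rpow_add hx,
        Real.rpow_add hx, Real.rpow_one, mul_assoc]]

lemma gammaMeasure_integral {a : ℝ} (ha : 0 < a) (F : ℝ → ℝ) :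
    ∫ x, F x ∂gammaMeasure a
      = ∫ x in Set.Ioi (0:ℝ), (x ^ (a - 1) * Real.exp (-x) / Real.Gamma a) * F x := by
  have hmeas : Measurable fun x : ℝ => Real.toNNReal (x ^ (a - 1) * Real.exp (-x) / Real.Gamma a) := by
    fun_prop
  have h1 : (fun x : ℝ => ENNReal.ofReal (x ^ (a - 1) * Real.exp (-x) / Real.Gamma a))
      = fun x : ℝ => ((Real.toNNReal (x ^ (a - 1) * Real.exp (-x) / Real.Gamma a) : ℝ≥0) : ℝ≥0∞) :=
    rfl
  rw [gammaMeasure, h1, integral_withDensity_eq_integral_smul hmeas F]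
  refine setIntegral_congr_fun measurableSet_Ioi fun x hx => ?_
  rw [NNReal.smul_def, smul_eq_mul, Real.coe_toNNReal]
  have hx' : (0:ℝ) < x := hx
  have hga := Real.Gamma_pos_of_pos ha
  positivity

lemma swap_lemma {β ε : ℝ} (hβ : 0 < β) (hε : 0 < ε) (f g : ℝ → ℝ)
    (hf : Measurable f) (hg : Measurable g) {Cf Cg : ℝ}
    (hfb : ∀ x, |f x| ≤ Cf) (hgb : ∀ x, |g x| ≤ Cg) :
    ∫ x in Set.Ioi (0:ℝ), ∫ y in Set.Ioo (0:ℝ) x, bkKer β ε f g x y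
      = ∫ y in Set.Ioi (0:ℝ), ∫ x in Set.Ioi y, bkKer β ε f g x y := by
  have hΓβ := Real.Gamma_pos_of_pos hβ
  have hΓε := Real.Gamma_pos_of_pos hε
  have hCf0 : 0 ≤ Cf := le_trans (abs_nonneg _) (hfb 0)
  have hCg0 : 0 ≤ Cg := le_trans (abs_nonneg _) (hgb 0)
  set B : ℝ := ∫ r in Set.Ioo (0:ℝ) 1, r ^ (ε - 1) * (1 - r) ^ (β - 1) with hB
  have hB0 : 0 ≤ B := by
    refine setIntegral_nonneg measurableSet_Ioo fun r hr => ?_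
    exact mul_nonneg (Real.rpow_nonneg hr.1.le _) (Real.rpow_nonneg (by linarith [hr.2]) _)
  set S : Set (ℝ × ℝ) := {q : ℝ × ℝ | 0 < q.2 ∧ q.2 < q.1} with hSdef
  set H : ℝ × ℝ → ℝ := Set.indicator S (fun q => bkKer β ε f g q.1 q.2) with hH
  have hSm : MeasurableSet S :=
    (measurableSet_lt measurable_const measurable_snd).inter
      (measurableSet_lt measurable_snd measurable_fst)
  have hKm : Measurable fun q : ℝ × ℝ => bkKer β ε f g q.1 q.2 := by
    unfold bkKer; fun_prop
  have hHm : Measurable H := hKm.indicator hSm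
  have hHx : ∀ x : ℝ, (fun y => H (x, y))
      = Set.indicator (Set.Ioo (0:ℝ) x) (fun y => bkKer β ε f g x y) := by
    intro x; funext y
    simp only [hH, hSdef, Set.indicator, Set.mem_setOf_eq, Set.mem_Ioo]
  have hHy : ∀ y : ℝ, 0 < y → (fun x => H (x, y))
      = Set.indicator (Set.Ioi y) (fun x => bkKer β ε f g x y) := by
    intro y hy; funext x
    simp only [hH, hSdef, Set.indicator, Set.mem_setOf_eq, Set.mem_Ioi, hy, true_and]
  have hHy0 : ∀ y : ℝ, y ≤ 0 → ∀ x : ℝ, H (x, y) = 0 := by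
    intro y hy x
    simp only [hH, hSdef, Set.indicator, Set.mem_setOf_eq]
    rw [if_neg (by intro h'; linarith [h'.1])]
  -- integrability in y for each x
  have hIx : ∀ x : ℝ, Integrable (fun y => H (x, y)) volume := by
    intro x
    rw [hHx x, integrable_indicator_iff measurableSet_Ioo]
    rcases le_or_gt x 0 with h | h
    · rw [Set.Ioo_eq_empty (by intro h'; linarith)]
      exact integrableOn_empty
    · have base := betaIntegrableScaled hβ hε h
      have hprod : IntegrableOn
          (fun y : ℝ => f y * (y ^ (ε - 1) * (x - y) ^ (β - 1))) (Set.Ioo (0:ℝ) x) := by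
        refine Integrable.bdd_mul base (c := Cf) (hf.aestronglyMeasurable.restrict) (Filter.Eventually.of_forall fun y => ?_)
        rw [Real.norm_eq_abs]; exact hfb y
      have hconst : IntegrableOn
          (fun y : ℝ => (g x * Real.exp (-x) / (Real.Gamma β * Real.Gamma ε)) *
            (f y * (y ^ (ε - 1) * (x - y) ^ (β - 1)))) (Set.Ioo (0:ℝ) x) :=
        hprod.const_mul _
      refine hconst.congr_fun (fun y _ => ?_) measurableSet_Ioo
      rw [bkKer]; ring
  -- pointwise bound for the iterated norm integral
  set D : ℝ → ℝ := Set.indicator (Set.Ioi (0:ℝ))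
    (fun x => (Cg * Cf / (Real.Gamma β * Real.Gamma ε) * B) *
      (Real.exp (-x) * x ^ (β + ε - 1))) with hD
  have hDint : Integrable D := by
    rw [hD, integrable_indicator_iff measurableSet_Ioi]
    exact (Real.GammaIntegral_convergent (add_pos hβ hε)).const_mul _
  have hnormle : ∀ x : ℝ, (∫ y, ‖H (x, y)‖) ≤ D x := by
    intro x
    rcases le_or_gt x 0 with h | h
    · have hz' : ∀ y : ℝ, H (x, y) = 0 := by
        intro y
        rw [congrFun (hHx x) y, Set.Ioo_eq_empty (by intro h'; linarith)]
        simp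
      simp only [hz', norm_zero, integral_zero]
      rw [hD, Set.indicator_of_notMem (by simpa using h)]
    · rw [hD, Set.indicator_of_mem (Set.mem_Ioi.2 h)]
      have hptw : ∀ y : ℝ, ‖H (x, y)‖
          = Set.indicator (Set.Ioo (0:ℝ) x) (fun y => ‖bkKer β ε f g x y‖) y := by
        intro y
        rw [congrFun (hHx x) y]
        exact norm_indicator_eq_indicator_norm _ _
      have h1 : (∫ y, ‖H (x, y)‖)
          = ∫ y in Set.Ioo (0:ℝ) x, ‖bkKer β ε f g x y‖ := by
        simp only [hptw]
        exact integral_indicator measurableSet_Ioo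
      rw [h1]
      have hmono : ∫ y in Set.Ioo (0:ℝ) x, ‖bkKer β ε f g x y‖
          ≤ ∫ y in Set.Ioo (0:ℝ) x,
              (Cg * Cf / (Real.Gamma β * Real.Gamma ε) * Real.exp (-x)) *
                (y ^ (ε - 1) * (x - y) ^ (β - 1)) := by
        have hint1 : IntegrableOn (fun y => ‖bkKer β ε f g x y‖) (Set.Ioo (0:ℝ) x) := by
          have hthis := (hIx x).norm
          simp only [hptw] at hthis
          rwa [integrable_indicator_iff measurableSet_Ioo] at hthis
        have hint2 : IntegrableOn
            (fun y => (Cg * Cf / (Real.Gamma β * Real.Gamma ε) * Real.exp (-x)) *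
              (y ^ (ε - 1) * (x - y) ^ (β - 1))) (Set.Ioo (0:ℝ) x) :=
          (betaIntegrableScaled hβ hε h).const_mul _
        refine setIntegral_mono_on hint1 hint2 measurableSet_Ioo fun y hy => ?_
        obtain ⟨hy0, hyx⟩ := hy
        have hxy : 0 < x - y := by linarith
        have hnn : 0 ≤ y ^ (ε - 1) * (x - y) ^ (β - 1) * Real.exp (-x) :=
          mul_nonneg (mul_nonneg (Real.rpow_nonneg hy0.le _) (Real.rpow_nonneg hxy.le _))
            (Real.exp_pos _).le
        rw [bkKer, Real.norm_eq_abs, abs_div, abs_mul, abs_of_nonneg hnn,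
          abs_of_pos (mul_pos hΓβ hΓε)]
        rw [div_le_iff₀ (mul_pos hΓβ hΓε)]
        have hb : |g x * f y| ≤ Cg * Cf :=
          le_trans (le_of_eq (abs_mul _ _)) (mul_le_mul (hgb x) (hfb y) (abs_nonneg _) hCg0)
        calc |g x * f y| * (y ^ (ε - 1) * (x - y) ^ (β - 1) * Real.exp (-x))
            ≤ (Cg * Cf) * (y ^ (ε - 1) * (x - y) ^ (β - 1) * Real.exp (-x)) :=
              mul_le_mul_of_nonneg_right hb hnn
          _ = Cg * Cf / (Real.Gamma β * Real.Gamma ε) * Real.exp (-x) *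
                (y ^ (ε - 1) * (x - y) ^ (β - 1)) * (Real.Gamma β * Real.Gamma ε) := by
              field_simp
      refine le_trans hmono (le_of_eq ?_)
      rw [MeasureTheory.integral_const_mul, betaScaledValue hβ hε h]
      ring
  -- integrability on the product space
  have hHint : Integrable H (volume.prod volume) := by
    refine (integrable_prod_iff hHm.aestronglyMeasurable).mpr ⟨?_, ?_⟩
    · exact Filter.Eventually.of_forall hIx
    · refine Integrable.mono' hDint ?_ (Filter.Eventually.of_forall fun x => ?_)
      · exact (hHm.norm.aestronglyMeasurable).integral_prod_right'
      · rw [Real.norm_eq_abs, abs_of_nonneg (integral_nonneg fun y => norm_nonneg _)]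
        exact hnormle x
  -- the swap
  have hswap : (∫ x, ∫ y, H (x, y)) = ∫ y, ∫ x, H (x, y) :=
    integral_integral_swap hHint
  calc ∫ x in Set.Ioi (0:ℝ), ∫ y in Set.Ioo (0:ℝ) x, bkKer β ε f g x y
      = ∫ x in Set.Ioi (0:ℝ), ∫ y, H (x, y) := by
        refine setIntegral_congr_fun measurableSet_Ioi fun x _ => ?_
        rw [hHx x, integral_indicator measurableSet_Ioo]
    _ = ∫ x, ∫ y, H (x, y) := by
        rw [← integral_indicator measurableSet_Ioi]
        congr 1
        funext x
        rcases le_or_gt x 0 with h | h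
        · rw [Set.indicator_of_notMem (by simpa using h)]
          have hz : (fun y => H (x, y)) = fun _ => (0:ℝ) := by
            rw [hHx x, Set.Ioo_eq_empty (by intro h'; linarith)]; simp
          rw [hz, integral_zero]
        · rw [Set.indicator_of_mem (Set.mem_Ioi.2 h)]
    _ = ∫ y, ∫ x, H (x, y) := hswap
    _ = ∫ y in Set.Ioi (0:ℝ), ∫ x, H (x, y) := by
        rw [← integral_indicator measurableSet_Ioi]
        congr 1
        funext y
        rcases le_or_gt y 0 with h | h
        · rw [Set.indicator_of_notMem (by simpa using h)]
          simp only [hHy0 y h, integral_zero]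
        · rw [Set.indicator_of_mem (Set.mem_Ioi.2 h)]
    _ = ∫ y in Set.Ioi (0:ℝ), ∫ x in Set.Ioi y, bkKer β ε f g x y := by
        refine setIntegral_congr_fun measurableSet_Ioi fun y hy => ?_
        rw [hHy y hy, integral_indicator measurableSet_Ioi]

theorem betaKernel_adjoint (β ε : ℝ) (hβ : 0 < β) (hε : 0 < ε)
    (f g : ℝ → ℝ) (hf : Measurable f) (hg : Measurable g)
    (hfb : ∃ C, ∀ x, |f x| ≤ C) (hgb : ∃ C, ∀ x, |g x| ≤ C) :
    ∫ x, g x * betaKernelOp β ε f x ∂(gammaMeasure (β + ε)) =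
      ∫ x, f x * betaKernelAdjOp β g x ∂(gammaMeasure ε) := by
  obtain ⟨Cf, hCf⟩ := hfb
  obtain ⟨Cg, hCg⟩ := hgb
  rw [gammaMeasure_integral (add_pos hβ hε), gammaMeasure_integral hε]
  calc ∫ x in Set.Ioi (0:ℝ),
        (x ^ (β + ε - 1) * Real.exp (-x) / Real.Gamma (β + ε)) * (g x * betaKernelOp β ε f x)
      = ∫ x in Set.Ioi (0:ℝ), ∫ y in Set.Ioo (0:ℝ) x, bkKer β ε f g x y :=
        setIntegral_congr_fun measurableSet_Ioi fun x hx => kernel_lhs hβ hε f g hx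
    _ = ∫ y in Set.Ioi (0:ℝ), ∫ x in Set.Ioi y, bkKer β ε f g x y :=
        swap_lemma hβ hε f g hf hg hCf hCg
    _ = ∫ y in Set.Ioi (0:ℝ),
          (y ^ (ε - 1) * Real.exp (-y) / Real.Gamma ε) * (f y * betaKernelAdjOp β g y) :=
        setIntegral_congr_fun measurableSet_Ioi fun y hy => (kernel_rhs hβ hε f g hy).symm

end BetaKernelAux
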